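/- Let A be a partially ordered set and L an algebraic lattice. Then the complete lattice of monotone functions from A to L, ordered pointwise, is an algebraic lattice, and its compact elements are exactly the least upper bounds of finitely many step functions: a monotone g : A → L is compact if and only if g = sSup S for some finite set S of step functions a ↘ c with a ∈ A and c a compact element of L. -/

import Mathlib

/-- An element `c` of a complete lattice is *compact* if whenever `c ≤ sSup S`
there is a finite subset `S' ⊆ S` with `c ≤ sSup S'`. -/
def IsCpt {L : Type*} [CompleteLattice L] (c : L) : Prop :=
  ∀ S : Set L, c ≤ sSup S → ∃ S' ⊆ S, S'.Finite ∧ c ≤ sSup S'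

/-- A complete lattice is *algebraic* if every element is the least upper bound of
some set of compact elements. -/
def IsAlgebraicLattice (L : Type*) [CompleteLattice L] : Prop :=
  ∀ x : L, ∃ B : Set L, (∀ b ∈ B, IsCpt b) ∧ x = sSup B

open Classical in
/-- The step function `a ↘ c : A → L`, sending `x` to `c` if `a ≤ x` and to `⊥` otherwise.
It is monotone, hence an element of the complete lattice `A →o L`. -/
noncomputable def step {A L : Type*} [PartialOrder A] [CompleteLattice L] (a : A) (c : L) :
    A →o L :=
  ⟨fun x => if a ≤ x then c else ⊥, by
    intro x y hxy
    dsimp only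
    split_ifs with h1 h2
    · exact le_refl c
    · exact absurd (h1.trans hxy) h2
    · exact bot_le
    · exact le_rfl⟩


section Aux
variable {A L : Type*} [PartialOrder A] [CompleteLattice L]

open Classical in
lemma step_le_iff {a : A} {c : L} {f : A →o L} : step a c ≤ f ↔ c ≤ f a := by
  constructor
  · intro h
    have := h a
    simpa using (show (if a ≤ a then c else ⊥) ≤ f a from this)
  · intro h x
    show (if a ≤ x then c else ⊥) ≤ f x
    split_ifs with h1
    · exact h.trans (f.mono h1)
    · exact bot_le

lemma step_cpt {a : A} {c : L} (hc : IsCpt c) : IsCpt (step a c) := by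
  intro S hS
  have hca : c ≤ sSup ((fun f : A →o L => f a) '' S) := by
    have := step_le_iff.mp hS
    rw [OrderHom.sSup_apply] at this
    refine this.trans ?_
    rw [sSup_image]
  obtain ⟨T, hTsub, hTfin, hcT⟩ := hc _ hca
  choose F hF1 hF2 using fun t (ht : t ∈ T) => hTsub ht
  classical
  refine ⟨{f | ∃ t, ∃ ht : t ∈ T, F t ht = f}, ?_, ?_, ?_⟩
  · rintro f ⟨t, ht, rfl⟩; exact hF1 t ht
  · exact hTfin.dependent_image F
  · rw [step_le_iff]
    refine hcT.trans (sSup_le fun t ht => ?_)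
    have h1 : t ≤ F t ht a := le_of_eq (hF2 t ht).symm
    refine h1.trans ?_
    have hmem : F t ht ∈ {f | ∃ t, ∃ ht : t ∈ T, F t ht = f} := ⟨t, ht, rfl⟩
    exact (le_sSup hmem : F t ht ≤ _) a

lemma eq_sSup_steps (halg : IsAlgebraicLattice L) (f : A →o L) :
    f = sSup {h : A →o L | ∃ a c, IsCpt c ∧ c ≤ f a ∧ h = step a c} := by
  apply le_antisymm
  · intro x
    obtain ⟨B, hB, hBx⟩ := halg (f x)
    show f x ≤ sSup {h : A →o L | ∃ a c, IsCpt c ∧ c ≤ f a ∧ h = step a c} x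
    rw [OrderHom.sSup_apply]
    calc f x = sSup B := hBx
    _ ≤ _ := by
      refine sSup_le fun b hb => ?_
      have hmem : step x b ∈ {h : A →o L | ∃ a c, IsCpt c ∧ c ≤ f a ∧ h = step a c} :=
        ⟨x, b, hB b hb, hBx ▸ le_sSup hb, rfl⟩
      refine le_trans ?_ (le_iSup₂ (f := fun g (_ : g ∈ _) => g x) (step x b) hmem)
      show b ≤ (@ite _ (x ≤ x) (Classical.propDecidable _) b ⊥)
      simp
  · refine sSup_le ?_
    rintro h ⟨a, c, hc, hca, rfl⟩
    exact step_le_iff.mpr hca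

end Aux

/-- For a poset `A` and an algebraic lattice `L`, the complete lattice `A →o L`
of monotone functions ordered pointwise is algebraic, and its compact elements are exactly
the least upper bounds of finitely many step functions `a ↘ c` with `c` compact in `L`. -/
theorem monotone_lattice_algebraic {A L : Type*} [PartialOrder A] [CompleteLattice L]
    (halg : IsAlgebraicLattice L) :
    IsAlgebraicLattice (A →o L) ∧
      ∀ g : A →o L, IsCpt g ↔
        ∃ S : Set (A →o L), S.Finite ∧
          (∀ h ∈ S, ∃ (a : A) (c : L), IsCpt c ∧ h = step a c) ∧ g = sSup S := by
  classical
  constructor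
  · intro f
    refine ⟨{h : A →o L | ∃ a c, IsCpt c ∧ c ≤ f a ∧ h = step a c}, ?_, eq_sSup_steps halg f⟩
    rintro h ⟨a, c, hc, _, rfl⟩
    exact step_cpt hc
  · intro g
    constructor
    · intro hg
      set D := {h : A →o L | ∃ a c, IsCpt c ∧ c ≤ g a ∧ h = step a c} with hD
      have hgD : g = sSup D := eq_sSup_steps halg g
      obtain ⟨S', hS'sub, hS'fin, hgS'⟩ := hg D hgD.le
      refine ⟨S', hS'fin, ?_, ?_⟩
      · intro h hh
        obtain ⟨a, c, hc, _, rfl⟩ := hS'sub hh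
        exact ⟨a, c, hc, rfl⟩
      · refine le_antisymm hgS' ?_
        rw [hgD]
        exact sSup_le_sSup hS'sub
    · rintro ⟨S, hSfin, hSsteps, rfl⟩
      intro T hT
      -- each element of S is compact
      have hcpt : ∀ h ∈ S, IsCpt h := by
        intro h hh
        obtain ⟨a, c, hc, rfl⟩ := hSsteps h hh
        exact step_cpt hc
      choose T' hT'sub hT'fin hT'le using fun h (hh : h ∈ S) =>
        hcpt h hh T ((le_sSup hh).trans hT)
      refine ⟨⋃ h ∈ S, ⋃ (hh : h ∈ S), T' h hh, ?_, ?_, ?_⟩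
      · intro x hx
        simp only [Set.mem_iUnion] at hx
        obtain ⟨h, hh, hh', hx⟩ := hx
        exact hT'sub h hh' hx
      · exact hSfin.biUnion fun h hh => Set.finite_iUnion fun hh' => hT'fin h hh'
      · refine sSup_le fun h hh => ?_
        refine (hT'le h hh).trans (sSup_le_sSup ?_)
        intro x hx
        simp only [Set.mem_iUnion]
        exact ⟨h, hh, hh, hx⟩
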